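/- Let A_1,…,A_k be finite nonempty subsets of the real interval (0,1]. Then there exists a vector e = (e_1,…,e_k) of positive integers such that the map (a_1,…,a_k) ↦ a_1^{e_1}·a_2^{e_2}⋯a_k^{e_k} is injective on the Cartesian product A_1 × A_2 × ⋯ × A_k; that is, for all tuples a,b in the product, if ∏_{i=1}^k a_i^{e_i} = ∏_{i=1}^k b_i^{e_i} then a_i = b_i for every i. -/

import Mathlib

open Polynomial in
/-- For finite nonempty sets `A₁,…,A_k ⊆ (0,1]` there is a vector of positive
integer exponents `e` making `(a₁,…,a_k) ↦ ∏ aᵢ^{eᵢ}` injective on `A₁ × ⋯ × A_k`. -/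
theorem exists_separating_exponents
    (k : ℕ) (A : Fin k → Finset ℝ)
    (hne : ∀ i, (A i).Nonempty)
    (hsub : ∀ i, ∀ a ∈ A i, a ∈ Set.Ioc (0 : ℝ) 1) :
    ∃ e : Fin k → ℕ, (∀ i, 0 < e i) ∧
      ∀ a b : Fin k → ℝ, (∀ i, a i ∈ A i) → (∀ i, b i ∈ A i) →
        (∏ i, a i ^ e i) = (∏ i, b i ^ e i) → ∀ i, a i = b i := by
  classical
  -- the polynomial attached to a pair of tuples
  set P : (Fin k → ℝ) → (Fin k → ℝ) → ℝ[X] :=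
    fun a b => ∑ i : Fin k, Polynomial.monomial (i : ℕ) (Real.log (a i) - Real.log (b i))
    with hP
  -- bad pairs
  set T : Finset ((Fin k → ℝ) × (Fin k → ℝ)) :=
    (Fintype.piFinset A ×ˢ Fintype.piFinset A).filter (fun p => p.1 ≠ p.2) with hT
  -- for bad pairs, P is nonzero
  have hPne : ∀ p ∈ T, P p.1 p.2 ≠ 0 := by
    rintro ⟨a, b⟩ hp
    simp only [hT, Finset.mem_filter, Finset.mem_product, Fintype.mem_piFinset] at hp
    obtain ⟨⟨ha, hb⟩, hab⟩ := hp
    obtain ⟨j, hj⟩ : ∃ j, a j ≠ b j := by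
      by_contra h
      push_neg at h
      exact hab (funext h)
    intro h0
    have hcoeff : (P a b).coeff (j : ℕ) = Real.log (a j) - Real.log (b j) := by
      rw [hP]
      simp only [Polynomial.finset_sum_coeff, Polynomial.coeff_monomial]
      rw [Finset.sum_eq_single j]
      · simp
      · intro i _ hij
        rw [if_neg (fun h => hij (Fin.val_injective h))]
      · simp
    have haj : 0 < a j := (hsub j _ (ha j)).1
    have hbj : 0 < b j := (hsub j _ (hb j)).1
    have : Real.log (a j) ≠ Real.log (b j) := by
      intro h
      exact hj (by rw [← Real.exp_log haj, ← Real.exp_log hbj, h])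
    rw [h0] at hcoeff
    simp only [Polynomial.coeff_zero] at hcoeff
    exact this (by linarith [hcoeff.symm])
  -- the set of roots of all these polynomials is finite
  have hRfin : (⋃ p ∈ T, {x : ℝ | (P p.1 p.2).IsRoot x}).Finite :=
    Set.Finite.biUnion T.finite_toSet (fun p hp => Polynomial.finite_setOf_isRoot (hPne p hp))
  -- choose a positive natural not mapping into roots
  have hfin2 : ({n : ℕ | (n : ℝ) ∈ ⋃ p ∈ T, {x : ℝ | (P p.1 p.2).IsRoot x}} ∪ {0}).Finite :=
    (hRfin.preimage (Nat.cast_injective.injOn)).union (Set.finite_singleton 0)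
  obtain ⟨n, hn⟩ := hfin2.infinite_compl.nonempty
  simp only [Set.mem_compl_iff, Set.mem_union, Set.mem_setOf_eq, Set.mem_singleton_iff,
    not_or] at hn
  obtain ⟨hnroot, hn0⟩ := hn
  have hnpos : 0 < n := Nat.pos_of_ne_zero hn0
  refine ⟨fun i => n ^ (i : ℕ), fun i => pow_pos hnpos _, ?_⟩
  intro a b ha hb hprod i
  by_contra hi
  have hab : a ≠ b := fun h => hi (congrFun h i)
  have hmem : (a, b) ∈ T := by
    simp only [hT, Finset.mem_filter, Finset.mem_product, Fintype.mem_piFinset]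
    exact ⟨⟨ha, hb⟩, hab⟩
  -- take logs of the product equality
  have hapos : ∀ j, 0 < a j := fun j => (hsub j _ (ha j)).1
  have hbpos : ∀ j, 0 < b j := fun j => (hsub j _ (hb j)).1
  have hlog : ∑ j : Fin k, ((n : ℝ) ^ (j : ℕ)) * Real.log (a j)
      = ∑ j : Fin k, ((n : ℝ) ^ (j : ℕ)) * Real.log (b j) := by
    have h1 := congrArg Real.log hprod
    rw [Real.log_prod (fun j _ => pow_ne_zero _ (hapos j).ne'),
        Real.log_prod (fun j _ => pow_ne_zero _ (hbpos j).ne')] at h1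
    simpa [Real.log_pow] using h1
  -- hence (n : ℝ) is a root of P a b
  have hroot : (P a b).IsRoot (n : ℝ) := by
    rw [hP]
    simp only [Polynomial.IsRoot, Polynomial.eval_finset_sum, Polynomial.eval_monomial]
    have : ∑ j : Fin k, (Real.log (a j) - Real.log (b j)) * (n : ℝ) ^ (j : ℕ)
        = ∑ j : Fin k, ((n : ℝ) ^ (j : ℕ)) * Real.log (a j)
          - ∑ j : Fin k, ((n : ℝ) ^ (j : ℕ)) * Real.log (b j) := by
      rw [← Finset.sum_sub_distrib]
      exact Finset.sum_congr rfl (fun j _ => by ring)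
    rw [this, hlog, sub_self]
  exact hnroot (Set.mem_biUnion hmem hroot)
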